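/- Let 𝓗 be a real Hilbert space, m > 0, and A : 𝓗 → 𝓗* a strongly monotone map with monotonicity constant m. Let R > 0 and 𝓑 = {u ∈ 𝓗 : ‖u‖ ≤ R}, and suppose the restriction of A to 𝓑 is Lipschitz continuous with Lipschitz constant M. Let J : 𝓗 → 𝓗* be the duality map, fix f ∈ 𝓗*, define Q : 𝓑 → 𝓗 by Qu = u − (m/M²)·J^{−1}(Au − f), and assume R ≥ (2/m)·‖A0 − f‖_{𝓗*}. Then there exists a unique u ∈ 𝓑 with Au = f; this u satisfies ‖u‖ ≤ (1/m)·‖A0 − f‖_{𝓗*}, and u = lim_{n→∞} u_n, where u₁ = 0 and u_{n+1} = Q u_n for all n ∈ ℕ. -/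

import Mathlib

open Filter Topology

set_option maxHeartbeats 1000000

/-- **Solution of `Au = f` via the Banach contraction theorem.**
Let `𝓗` be a real Hilbert space, `A : 𝓗 → 𝓗*` strongly monotone with constant `m > 0`,
Lipschitz with constant `M` on the closed ball `𝓑` of radius `R`, let `J` be the duality map,
`f ∈ 𝓗*`, `Q u = u - (m/M²) J⁻¹(Au - f)`, and assume `R ≥ (2/m)·‖A0 - f‖`.  Then there is a
unique `u ∈ 𝓑` with `Au = f`; it satisfies `‖u‖ ≤ (1/m)·‖A0 - f‖` and is the limit of the
iterates `u₁ = 0`, `u_{n+1} = Q u_n`. -/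
theorem solution_by_contractive_iteration
    {𝓗 : Type*} [NormedAddCommGroup 𝓗] [InnerProductSpace ℝ 𝓗] [CompleteSpace 𝓗]
    (m : ℝ) (hm : 0 < m) (A : 𝓗 → StrongDual ℝ 𝓗)
    (hmono : ∀ u v : 𝓗, m * ‖u - v‖ ^ 2 ≤ (A u - A v) (u - v))
    (R : ℝ) (hR : 0 < R) (M : ℝ) (hmM : m ≤ M)
    (hlip : ∀ u v : 𝓗, ‖u‖ ≤ R → ‖v‖ ≤ R → ‖A u - A v‖ ≤ M * ‖u - v‖)
    (f : StrongDual ℝ 𝓗)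
    (hRf : 2 / m * ‖A 0 - f‖ ≤ R) :
    ∃ u : 𝓗, ‖u‖ ≤ R ∧ A u = f ∧
      (∀ v : 𝓗, ‖v‖ ≤ R → A v = f → v = u) ∧
      ‖u‖ ≤ 1 / m * ‖A 0 - f‖ ∧
      Tendsto
        (fun n : ℕ =>
          (fun w : 𝓗 => w - (m / M ^ 2) • (InnerProductSpace.toDual ℝ 𝓗).symm (A w - f))^[n] 0)
        atTop (𝓝 u) := by
  have hM : (0:ℝ) < M := hm.trans_le hmM
  set c : ℝ := m / M ^ 2 with hc
  have hc0 : 0 < c := div_pos hm (by positivity)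
  set T : 𝓗 → 𝓗 := fun w => w - c • (InnerProductSpace.toDual ℝ 𝓗).symm (A w - f) with hT
  set t : ℝ := m ^ 2 / M ^ 2 with ht
  have ht0 : 0 < t := div_pos (by positivity) (by positivity)
  have ht1 : t ≤ 1 := by
    rw [ht, div_le_one (by positivity)]
    exact pow_le_pow_left₀ hm.le hmM 2
  set k : ℝ := Real.sqrt (1 - t) with hk
  have hk0 : 0 ≤ k := Real.sqrt_nonneg _
  have hksq : k ^ 2 = 1 - t := Real.sq_sqrt (by linarith)
  have hk1 : k < 1 := by
    nlinarith [hksq, hk0]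
  have hkle : k ≤ 1 - t / 2 := by
    nlinarith [hksq, hk0]
  -- contraction estimate on the ball
  have hcontr : ∀ u v : 𝓗, ‖u‖ ≤ R → ‖v‖ ≤ R → ‖T u - T v‖ ≤ k * ‖u - v‖ := by
    intro u v hu hv
    have hz : T u - T v = (u - v) - c • (InnerProductSpace.toDual ℝ 𝓗).symm (A u - A v) := by
      simp only [hT, map_sub, smul_sub]
      abel
    set z := (InnerProductSpace.toDual ℝ 𝓗).symm (A u - A v) with hzdef
    have hzn : ‖z‖ = ‖A u - A v‖ := LinearIsometryEquiv.norm_map _ _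
    have hinner : inner ℝ z (u - v) = (A u - A v) (u - v) := by
      rw [hzdef]; exact InnerProductSpace.toDual_symm_apply
    have hsq : ‖T u - T v‖ ^ 2 ≤ (1 - t) * ‖u - v‖ ^ 2 := by
      rw [hz, norm_sub_sq_real]
      have h1 : inner ℝ (u - v) (c • z) = c * ((A u - A v) (u - v)) := by
        rw [real_inner_smul_right, real_inner_comm, hinner]
      have h2 : ‖c • z‖ ^ 2 = c ^ 2 * ‖A u - A v‖ ^ 2 := by
        rw [norm_smul, Real.norm_eq_abs, abs_of_pos hc0, mul_pow, hzn]
      rw [h1, h2]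
      have hmonouv := hmono u v
      have hlipuv := hlip u v hu hv
      have hAnn : (0:ℝ) ≤ ‖A u - A v‖ := norm_nonneg _
      have hsq2 : ‖A u - A v‖ ^ 2 ≤ M ^ 2 * ‖u - v‖ ^ 2 := by
        nlinarith [norm_nonneg (u - v)]
      have hcm : c * m = t := by rw [hc, ht]; ring
      have hcM : c ^ 2 * M ^ 2 = t := by
        rw [hc, ht]; field_simp
      have hb1 : t * ‖u - v‖ ^ 2 ≤ c * ((A u - A v) (u - v)) := by
        have h := mul_le_mul_of_nonneg_left hmonouv hc0.le
        nlinarith [h]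
      have hb2 : c ^ 2 * ‖A u - A v‖ ^ 2 ≤ t * ‖u - v‖ ^ 2 := by
        have h := mul_le_mul_of_nonneg_left hsq2 (sq_nonneg c)
        nlinarith [h]
      linarith [hb1, hb2]
    have : ‖T u - T v‖ = Real.sqrt (‖T u - T v‖ ^ 2) := by
      rw [Real.sqrt_sq (norm_nonneg _)]
    rw [this]
    have hkn : k * ‖u - v‖ = Real.sqrt ((1 - t) * ‖u - v‖ ^ 2) := by
      rw [Real.sqrt_mul (by linarith), Real.sqrt_sq (norm_nonneg _)]
    rw [hkn]
    exact Real.sqrt_le_sqrt hsq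
  have hA0f : ‖A 0 - f‖ ≤ m * R / 2 := by
    rw [div_mul_eq_mul_div, div_le_iff₀ hm, mul_comm] at hRf
    linarith
  have hT0 : ‖T 0‖ = c * ‖A 0 - f‖ := by
    simp only [hT]
    rw [zero_sub, norm_neg, norm_smul, LinearIsometryEquiv.norm_map, Real.norm_eq_abs,
      abs_of_pos hc0]
  -- T maps the ball into itself
  have hmaps : Set.MapsTo T (Metric.closedBall (0:𝓗) R) (Metric.closedBall (0:𝓗) R) := by
    intro u hu
    rw [Metric.mem_closedBall, dist_zero_right] at hu ⊢
    have h1 : ‖T u‖ ≤ ‖T u - T 0‖ + ‖T 0‖ := by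
      calc ‖T u‖ = ‖(T u - T 0) + T 0‖ := by rw [sub_add_cancel]
        _ ≤ ‖T u - T 0‖ + ‖T 0‖ := norm_add_le _ _
    have h2 : ‖T u - T 0‖ ≤ k * ‖u - 0‖ := hcontr u 0 hu (by simpa using hR.le)
    rw [sub_zero] at h2
    have h3 : c * ‖A 0 - f‖ ≤ c * (m * R / 2) := by
      exact mul_le_mul_of_nonneg_left hA0f hc0.le
    have h4 : c * (m * R / 2) = t * R / 2 := by rw [hc, ht]; ring
    have h5 : k * ‖u‖ ≤ k * R := mul_le_mul_of_nonneg_left hu hk0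
    have h6 : k * R ≤ (1 - t/2) * R := by
      exact mul_le_mul_of_nonneg_right hkle hR.le
    calc ‖T u‖ ≤ k * ‖u‖ + ‖T 0‖ := by linarith [h1, h2]
      _ ≤ (1 - t/2) * R + t * R / 2 := by rw [hT0]; linarith
      _ = R := by ring
  have hsc : IsComplete (Metric.closedBall (0:𝓗) R) :=
    Metric.isClosed_closedBall.isComplete
  set K : NNReal := Real.toNNReal k with hK
  have hKk : (K : ℝ) = k := Real.coe_toNNReal k hk0
  have hcw : ContractingWith K (hmaps.restrict T _ _) := by
    constructor
    · exact_mod_cast (by rw [hKk]; exact hk1 : (K:ℝ) < 1)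
    · apply LipschitzWith.of_dist_le_mul
      rintro ⟨x, hx⟩ ⟨y, hy⟩
      rw [Subtype.dist_eq, Subtype.dist_eq]
      simp only [Set.MapsTo.val_restrict_apply]
      rw [dist_eq_norm, dist_eq_norm, hKk]
      exact hcontr x y (by simpa [dist_zero_right] using hx)
        (by simpa [dist_zero_right] using hy)
  have h0mem : (0:𝓗) ∈ Metric.closedBall (0:𝓗) R := by
    simp [hR.le]
  obtain ⟨u, hus, hfix, htend, -⟩ :=
    hcw.exists_fixedPoint' hsc hmaps h0mem (edist_ne_top _ _)
  rw [Metric.mem_closedBall, dist_zero_right] at hus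
  have hAu : A u = f := by
    have h1 : T u = u := hfix
    rw [hT] at h1
    simp only at h1
    have h2 : c • (InnerProductSpace.toDual ℝ 𝓗).symm (A u - f) = 0 := sub_eq_self.mp h1
    have h3 : (InnerProductSpace.toDual ℝ 𝓗).symm (A u - f) = 0 :=
      (smul_eq_zero.mp h2).resolve_left hc0.ne'
    have h4 : A u - f = 0 := by
      have := congrArg (InnerProductSpace.toDual ℝ 𝓗) h3
      simpa using this
    exact sub_eq_zero.mp h4
  refine ⟨u, hus, hAu, ?_, ?_, htend⟩
  · intro v hv hAv
    have := hmono v u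
    rw [hAv, hAu, sub_self] at this
    simp only [ContinuousLinearMap.zero_apply] at this
    have hnn : ‖v - u‖ ^ 2 ≤ 0 := by nlinarith
    have : ‖v - u‖ = 0 := by nlinarith [norm_nonneg (v - u)]
    have := norm_eq_zero.mp this
    exact sub_eq_zero.mp this
  · have h1 := hmono u 0
    rw [sub_zero, hAu] at h1
    have h2 : (f - A 0) u ≤ ‖f - A 0‖ * ‖u‖ := by
      calc (f - A 0) u ≤ |(f - A 0) u| := le_abs_self _
        _ ≤ ‖f - A 0‖ * ‖u‖ := (f - A 0).le_opNorm u
    have h3 : ‖f - A 0‖ = ‖A 0 - f‖ := norm_sub_rev _ _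
    rcases eq_or_lt_of_le (norm_nonneg u) with h | h
    · rw [← h]
      positivity
    · have hmu : m * ‖u‖ ≤ ‖A 0 - f‖ := by
        have h4 := h1.trans (h2.trans_eq (by rw [h3]))
        nlinarith
      rw [one_div, ← div_eq_inv_mul, le_div_iff₀ hm, mul_comm]
      exact hmu
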